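/- Let n ≥ 3 and let a, b be integers with 1 ≤ a ≤ n−1, 1 ≤ b ≤ n−1, and a ≠ b. Define the simple graph G' on vertex set {0,1,…,n−1} whose edge set consists of: the edges {i, i+1} for every 0 ≤ i ≤ n−2 with i+1 ∉ {a,b}; the edge {0,a}; the edge {a−1,b−1}; and, provided b ≠ n−1, the edge {b,n−1}. Then G' is connected if and only if b < a; moreover, if a < b then G' has exactly two connected components, with vertex sets {0,…,b−1} and {b,…,n−1}. -/
import Mathlib


/-- let `n ≥ 3` and `a b` be integers with `1 ≤ a ≤ n-1`, `1 ≤ b ≤ n-1` and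
`a ≠ b`.  The simple graph `G'` on `{0,…,n-1}` with edges `{i,i+1}` for `0 ≤ i ≤ n-2` with
`i+1 ∉ {a,b}`, the edge `{0,a}`, the edge `{a-1,b-1}`, and (provided `b ≠ n-1`) the edge
`{b,n-1}`, is connected iff `b < a`; moreover, if `a < b` then `G'` has exactly two
connected components, with vertex sets `{0,…,b-1}` and `{b,…,n-1}` (i.e. two vertices are
reachable from one another iff they lie on the same side of `b`). -/
theorem stmt_9 (n a b : ℕ) (hn : 3 ≤ n) (ha1 : 1 ≤ a) (ha2 : a ≤ n - 1)
    (hb1 : 1 ≤ b) (hb2 : b ≤ n - 1) (hab : a ≠ b) :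
    ∀ G' : SimpleGraph (Fin n),
      G' = SimpleGraph.fromRel (fun x y : Fin n =>
        ((x : ℕ) + 1 = (y : ℕ) ∧ (y : ℕ) ≠ a ∧ (y : ℕ) ≠ b) ∨
        ((x : ℕ) = 0 ∧ (y : ℕ) = a) ∨
        ((x : ℕ) = a - 1 ∧ (y : ℕ) = b - 1) ∨
        (b ≠ n - 1 ∧ (x : ℕ) = b ∧ (y : ℕ) = n - 1)) →
      (G'.Connected ↔ b < a) ∧
      (a < b → ∀ x y : Fin n, G'.Reachable x y ↔ ((x : ℕ) < b ↔ (y : ℕ) < b)) := by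
  intro G' hG'
  subst hG'
  set G' := SimpleGraph.fromRel (fun x y : Fin n =>
        ((x : ℕ) + 1 = (y : ℕ) ∧ (y : ℕ) ≠ a ∧ (y : ℕ) ≠ b) ∨
        ((x : ℕ) = 0 ∧ (y : ℕ) = a) ∨
        ((x : ℕ) = a - 1 ∧ (y : ℕ) = b - 1) ∨
        (b ≠ n - 1 ∧ (x : ℕ) = b ∧ (y : ℕ) = n - 1)) with hG
  have han : a < n := by omega
  have hbn : b < n := by omega
  have h0n : 0 < n := by omega
  -- consecutive edges
  have hadj : ∀ (i j : Fin n), (i : ℕ) + 1 = (j : ℕ) → (j : ℕ) ≠ a → (j : ℕ) ≠ b →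
      G'.Adj i j := by
    intro i j h1 h2 h3
    rw [hG, SimpleGraph.fromRel_adj]
    exact ⟨by intro h; rw [h] at h1; omega, Or.inl (Or.inl ⟨h1, h2, h3⟩)⟩
  have hadj0a : G'.Adj ⟨0, h0n⟩ ⟨a, han⟩ := by
    rw [hG, SimpleGraph.fromRel_adj]
    refine ⟨?_, Or.inl (Or.inr (Or.inl ⟨rfl, rfl⟩))⟩
    simp [Fin.ext_iff]; omega
  have hadjab : G'.Adj ⟨a - 1, by omega⟩ ⟨b - 1, by omega⟩ := by
    rw [hG, SimpleGraph.fromRel_adj]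
    refine ⟨?_, Or.inl (Or.inr (Or.inr (Or.inl ⟨rfl, rfl⟩)))⟩
    simp [Fin.ext_iff]; omega
  -- chain lemma
  have chain : ∀ (s : ℕ) (hs : s < n) (k : ℕ) (hk : k < n), s ≤ k →
      (∀ j, s < j → j ≤ k → j ≠ a ∧ j ≠ b) → G'.Reachable ⟨s, hs⟩ ⟨k, hk⟩ := by
    intro s hs k
    induction k with
    | zero =>
      intro hk hsk _
      have : s = 0 := Nat.le_zero.mp hsk
      subst this
      exact SimpleGraph.Reachable.refl _
    | succ k ih =>
      intro hk hsk hforb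
      rcases Nat.eq_or_lt_of_le hsk with heq | hlt
      · exact heq ▸ SimpleGraph.Reachable.refl _
      · have hsk' : s ≤ k := Nat.lt_succ_iff.mp hlt
        have hr := ih (by omega) hsk' (fun j h1 h2 => hforb j h1 (Nat.le_succ_of_le h2))
        have hne := hforb (k + 1) hlt le_rfl
        exact hr.trans (hadj ⟨k, by omega⟩ ⟨k + 1, hk⟩ rfl hne.1 hne.2).reachable
  -- invariant in the case a < b : every edge stays on one side of b
  have inv : a < b → ∀ x y : Fin n, G'.Adj x y → ((x : ℕ) < b ↔ (y : ℕ) < b) := by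
    intro hab' x y hxy
    rw [hG, SimpleGraph.fromRel_adj] at hxy
    obtain ⟨-, h | h⟩ := hxy <;>
      rcases h with ⟨h1, h2, h3⟩ | ⟨h1, h2⟩ | ⟨h1, h2⟩ | ⟨h1, h2, h3⟩ <;> omega
  have inv' : a < b → ∀ x y : Fin n, G'.Reachable x y → ((x : ℕ) < b ↔ (y : ℕ) < b) := by
    intro hab' x y ⟨w⟩
    induction w with
    | nil => rfl
    | cons h w ih => exact (inv hab' _ _ h).trans ih
  -- in the case a < b : vertices below b reach 0, vertices at least b reach b
  have reach0 : a < b → ∀ (k : ℕ) (hk : k < n), k < b →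
      G'.Reachable ⟨0, h0n⟩ ⟨k, hk⟩ := by
    intro hab' k hk hkb
    rcases Nat.lt_or_ge k a with h | h
    · exact chain 0 h0n k hk (by omega) (fun j h1 h2 => by omega)
    · exact hadj0a.reachable.trans (chain a han k hk h (fun j h1 h2 => by omega))
  have reachb : a < b → ∀ (k : ℕ) (hk : k < n), b ≤ k →
      G'.Reachable ⟨b, hbn⟩ ⟨k, hk⟩ := by
    intro hab' k hk hbk
    exact chain b hbn k hk hbk (fun j h1 h2 => by omega)
  -- in the case b < a : everything reaches 0
  have reachall : b < a → ∀ (k : ℕ) (hk : k < n), G'.Reachable ⟨k, hk⟩ ⟨0, h0n⟩ := by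
    intro hba k hk
    have hb0 : G'.Reachable ⟨b, hbn⟩ ⟨0, h0n⟩ := by
      have c1 : G'.Reachable ⟨b, hbn⟩ ⟨a - 1, by omega⟩ :=
        chain b hbn (a - 1) (by omega) (by omega) (fun j h1 h2 => by omega)
      have c2 : G'.Reachable ⟨0, h0n⟩ ⟨b - 1, by omega⟩ :=
        chain 0 h0n (b - 1) (by omega) (by omega) (fun j h1 h2 => by omega)
      exact (c1.trans hadjab.reachable).trans c2.symm
    rcases Nat.lt_or_ge k b with h | h
    · exact (chain 0 h0n k hk (by omega) (fun j h1 h2 => by omega)).symm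
    · rcases Nat.lt_or_ge k a with h' | h'
      · exact (chain b hbn k hk h (fun j h1 h2 => by omega)).symm.trans hb0
      · exact ((chain a han k hk h' (fun j h1 h2 => by omega)).symm.trans
          hadj0a.symm.reachable)
  constructor
  · constructor
    · intro hconn
      by_contra hba
      have hab' : a < b := by omega
      have := inv' hab' ⟨0, h0n⟩ ⟨b, hbn⟩ (hconn.preconnected _ _)
      simp at this
      omega
    · intro hba
      have : Nonempty (Fin n) := ⟨⟨0, h0n⟩⟩
      refine ⟨fun x y => ?_⟩
      obtain ⟨k, hk⟩ := x
      obtain ⟨l, hl⟩ := y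
      exact (reachall hba k hk).trans (reachall hba l hl).symm
  · intro hab' x y
    constructor
    · exact inv' hab' x y
    · intro hside
      obtain ⟨k, hk⟩ := x
      obtain ⟨l, hl⟩ := y
      rcases Nat.lt_or_ge k b with h | h
      · have h' : l < b := by simp at hside; omega
        exact (reach0 hab' k hk h).symm.trans (reach0 hab' l hl h')
      · have h' : b ≤ l := by simp at hside; omega
        exact (reachb hab' k hk h).symm.trans (reachb hab' l hl h')
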